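/- Let N ≥ 1, let P = {(i,j) ∈ Fin N × Fin N : i < j}, and let B be the P × (Fin N) real matrix with B_{(i,j),k} = 1 if k = i, −1 if k = j, and 0 otherwise. For any ρ : P → ℝ define u* = (1/N)·(Bᵀ ·ᵥ ρ). Then for every vector u : Fin N → ℝ, Σ_{p ∈ P} ((B ·ᵥ u*)(p) − ρ(p))² ≤ Σ_{p ∈ P} ((B ·ᵥ u)(p) − ρ(p))²; that is, u* minimizes the least-squares objective ‖Bu − ρ‖² over all utility vectors. -/

import Mathlib

open Matrix Finset

lemma pm_sum_subtype {N : ℕ} (g : Fin N × Fin N → ℝ) :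
    ∑ p : {p : Fin N × Fin N // p.1 < p.2}, g p.1 =
      ∑ i : Fin N, ∑ j : Fin N, if i < j then g (i, j) else 0 := by
  rw [← Finset.subtype_univ, Finset.sum_subtype_eq_sum_filter, Finset.sum_filter,
    Fintype.sum_prod_type]

lemma pm_pull {N : ℕ} (k : Fin N) (F : Fin N → Fin N → ℝ) :
    ∑ i : Fin N, ∑ j : Fin N, (if k = i then F i j else 0) = ∑ j, F k j := by
  have h : ∀ i : Fin N, ∑ j : Fin N, (if k = i then F i j else 0)
      = if k = i then ∑ j, F i j else 0 := by
    intro i; split <;> simp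
  rw [Finset.sum_congr rfl fun i _ => h i, Finset.sum_ite_eq]
  simp

lemma pm_key {N : ℕ} (v : Fin N → ℝ) (k : Fin N) :
    ∑ i : Fin N, ∑ j : Fin N,
      (if i < j then (if k = i then (1:ℝ) else if k = j then -1 else 0) * (v i - v j) else 0)
      = N * v k - ∑ j, v j := by
  have step : ∀ i j : Fin N,
      (if i < j then (if k = i then (1:ℝ) else if k = j then -1 else 0) * (v i - v j) else 0)
      = (if k = i then (if i < j then v k - v j else 0) else 0)
        + (if k = j then (if i < j then v k - v i else 0) else 0) := by
    intro i j
    by_cases hij : i < j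
    · rcases eq_or_ne k i with rfl | hi
      · have hkj : ¬ k = j := ne_of_lt hij
        simp [hij, hkj]
      · rcases eq_or_ne k j with rfl | hj
        · simp [hij, hi]
        · simp [hij, hi, hj]
    · simp [hij]
  simp only [step, Finset.sum_add_distrib]
  rw [pm_pull]
  rw [Finset.sum_comm
    (f := fun i j => (if k = j then (if i < j then v k - v i else 0) else 0))]
  rw [pm_pull]
  rw [← Finset.sum_add_distrib]
  have h2 : ∀ j : Fin N, ((if k < j then v k - v j else 0) + (if j < k then v k - v j else 0))
      = v k - v j := by
    intro j
    rcases lt_trichotomy k j with h | rfl | h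
    · simp [h, asymm h]
    · simp
    · simp [h, asymm h]
  rw [Finset.sum_congr rfl fun j _ => h2 j, Finset.sum_sub_distrib]
  simp [Finset.card_univ, mul_comm]

set_option maxHeartbeats 1000000 in
/-- The potential-method solution `u* = (1/N)·Bᵀρ` minimizes the least-squares
objective `‖Bu - ρ‖²` over all utility vectors. -/
theorem potential_method_solution_minimizes
    (N : ℕ) (hN : 1 ≤ N)
    (B : Matrix {p : Fin N × Fin N // p.1 < p.2} (Fin N) ℝ)
    (hB : ∀ p k, B p k =
      if k = p.1.1 then 1 else if k = p.1.2 then -1 else 0)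
    (ρ : {p : Fin N × Fin N // p.1 < p.2} → ℝ)
    (uStar : Fin N → ℝ)
    (huStar : uStar = (1 / (N : ℝ)) • (Bᵀ *ᵥ ρ)) :
    ∀ u : Fin N → ℝ,
      ∑ p, ((B *ᵥ uStar) p - ρ p) ^ 2 ≤ ∑ p, ((B *ᵥ u) p - ρ p) ^ 2 := by
  have hN0 : (N : ℝ) ≠ 0 := by positivity
  -- B applied to a vector
  have hBv : ∀ (v : Fin N → ℝ) (p : {p : Fin N × Fin N // p.1 < p.2}),
      (B *ᵥ v) p = v p.1.1 - v p.1.2 := by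
    intro v p
    have hne : p.1.1 ≠ p.1.2 := ne_of_lt p.2
    have hterm : ∀ k, B p k * v k
        = (if p.1.1 = k then v k else 0) - (if p.1.2 = k then v k else 0) := by
      intro k
      rw [hB]
      rcases eq_or_ne k p.1.1 with rfl | h1
      · simp [hne.symm, eq_comm]
      · rcases eq_or_ne k p.1.2 with rfl | h2
        · simp [h1, Ne.symm h1]
        · simp [h1, h2, Ne.symm h1, Ne.symm h2]
    simp only [mulVec, dotProduct]
    rw [Finset.sum_congr rfl fun k _ => hterm k, Finset.sum_sub_distrib]
    simp [Finset.sum_ite_eq]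
  -- column sums of B are zero
  have hcol : ∀ p : {p : Fin N × Fin N // p.1 < p.2}, ∑ k, B p k = 0 := by
    intro p
    have hne : p.1.1 ≠ p.1.2 := ne_of_lt p.2
    have hterm : ∀ k, B p k
        = (if p.1.1 = k then (1:ℝ) else 0) - (if p.1.2 = k then (1:ℝ) else 0) := by
      intro k
      rw [hB]
      rcases eq_or_ne k p.1.1 with rfl | h1
      · simp [hne.symm, eq_comm]
      · rcases eq_or_ne k p.1.2 with rfl | h2
        · simp [h1, Ne.symm h1]
        · simp [h1, h2, Ne.symm h1, Ne.symm h2]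
    rw [Finset.sum_congr rfl fun k _ => hterm k, Finset.sum_sub_distrib]
    simp [Finset.sum_ite_eq]
  -- sum of entries of uStar is zero
  have hsumU : ∑ k, uStar k = 0 := by
    rw [huStar]
    simp only [Pi.smul_apply, smul_eq_mul, ← Finset.mul_sum]
    have : ∑ k, (Bᵀ *ᵥ ρ) k = 0 := by
      simp only [mulVec, dotProduct, transpose_apply]
      rw [Finset.sum_comm]
      rw [Finset.sum_congr rfl fun p _ => by
        rw [← Finset.sum_mul, hcol p, zero_mul]]
      simp
    rw [this, mul_zero]
  -- quadratic part of the normal equations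
  have hquad : ∀ (v : Fin N → ℝ) (k : Fin N),
      ∑ p, B p k * (B *ᵥ v) p = N * v k - ∑ j, v j := by
    intro v k
    have : ∀ p : {p : Fin N × Fin N // p.1 < p.2}, B p k * (B *ᵥ v) p
        = (fun q : Fin N × Fin N =>
            (if k = q.1 then (1:ℝ) else if k = q.2 then -1 else 0) * (v q.1 - v q.2)) p.1 := by
      intro p
      rw [hB, hBv]
    exact (Finset.sum_congr rfl fun p _ => this p).trans
      ((pm_sum_subtype (fun q : Fin N × Fin N =>
        (if k = q.1 then (1:ℝ) else if k = q.2 then -1 else 0) * (v q.1 - v q.2))).trans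
        (pm_key v k))
  -- normal equations
  have hnorm : ∀ k, ∑ p, B p k * ((B *ᵥ uStar) p - ρ p) = 0 := by
    intro k
    have hrk : (Bᵀ *ᵥ ρ) k = ∑ p, B p k * ρ p := by
      simp [mulVec, dotProduct, transpose_apply]
    have huk : uStar k = (1 / (N : ℝ)) * (Bᵀ *ᵥ ρ) k := by rw [huStar]; simp
    have : ∑ p, B p k * ((B *ᵥ uStar) p - ρ p)
        = (∑ p, B p k * (B *ᵥ uStar) p) - ∑ p, B p k * ρ p := by
      rw [← Finset.sum_sub_distrib]
      exact Finset.sum_congr rfl fun p _ => by ring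
    rw [this, hquad, hsumU, ← hrk]
    rw [huk]
    field_simp
    ring
  intro u
  set d : Fin N → ℝ := fun k => u k - uStar k with hd
  have hcross : ∑ p, ((B *ᵥ uStar) p - ρ p) * (B *ᵥ d) p = 0 := by
    have : ∀ p : {p : Fin N × Fin N // p.1 < p.2}, ((B *ᵥ uStar) p - ρ p) * (B *ᵥ d) p
        = ∑ k, B p k * ((B *ᵥ uStar) p - ρ p) * d k := by
      intro p
      simp only [mulVec, dotProduct, Finset.mul_sum]
      exact Finset.sum_congr rfl fun k _ => by ring
    rw [Finset.sum_congr rfl fun p _ => this p, Finset.sum_comm]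
    rw [Finset.sum_congr rfl fun k _ => by
      rw [← Finset.sum_mul, hnorm k, zero_mul]]
    simp
  have hdecomp : ∀ p : {p : Fin N × Fin N // p.1 < p.2},
      (B *ᵥ u) p - ρ p = ((B *ᵥ uStar) p - ρ p) + (B *ᵥ d) p := by
    intro p
    rw [hBv u, hBv uStar, hBv d]
    simp only [hd]
    ring
  calc ∑ p, ((B *ᵥ uStar) p - ρ p) ^ 2
      ≤ ∑ p, ((B *ᵥ uStar) p - ρ p) ^ 2
        + (2 * ∑ p, ((B *ᵥ uStar) p - ρ p) * (B *ᵥ d) p + ∑ p, ((B *ᵥ d) p) ^ 2) := by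
        rw [hcross]
        have : (0:ℝ) ≤ ∑ p, ((B *ᵥ d) p) ^ 2 :=
          Finset.sum_nonneg fun p _ => sq_nonneg _
        linarith
    _ = ∑ p, ((B *ᵥ u) p - ρ p) ^ 2 := by
        rw [Finset.mul_sum, ← Finset.sum_add_distrib, ← Finset.sum_add_distrib]
        exact Finset.sum_congr rfl fun p _ => by rw [hdecomp p]; ring
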